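/- arXiv:math/0611742 — 2 statements merged into one kernel-verified Lean document; each statement's English description precedes it below -/
import Mathlib

section
/- Let (A,m) be a multiarrangement in V = K^ℓ. For a prime ideal P ⊆ S and X ∈ L(A), let X(P) = ∩{H ∈ A : X ⊆ H and α_H ∈ P}. Then for every p with 0 ≤ p ≤ ℓ, the localization at P of the inclusion D^p(A_X,m_X) ⊆ D^p(A_{X(P)},m_{X(P)}) is an isomorphism: D^p(A_X,m_X)_P = D^p(A_{X(P)},m_{X(P)})_P. (That is, the functors D^p : L(A) → (S-Mod) are local.) -/
open MvPolynomial

attribute [local instance] Classical.propDecidable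

noncomputable section

/-- The linear form (degree-one polynomial) associated to a linear functional on `K^ℓ`. -/
def formPoly {K : Type*} [Field K] {ℓ : ℕ} (φ : Module.Dual K (Fin ℓ → K)) :
    MvPolynomial (Fin ℓ) K :=
  ∑ i : Fin ℓ, MvPolynomial.C (φ (Pi.single i 1)) * MvPolynomial.X i

/-- A multiarrangement of hyperplanes in `K^ℓ`: a finite set of (pairwise distinct)
hyperplanes, recorded by nonzero defining linear functionals with pairwise distinct
kernels, together with a positive multiplicity attached to each hyperplane. -/
structure MultiArr (K : Type*) [Field K] (ℓ : ℕ) where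
  duals : Finset (Module.Dual K (Fin ℓ → K))
  ne_zero : ∀ φ ∈ duals, φ ≠ 0
  distinct_ker : ∀ φ ∈ duals, ∀ ψ ∈ duals, φ ≠ ψ → LinearMap.ker φ ≠ LinearMap.ker ψ
  mult : Module.Dual K (Fin ℓ → K) → ℕ
  mult_pos : ∀ φ ∈ duals, 0 < mult φ

variable {K : Type*} [Field K] {ℓ : ℕ}

/-- `Der^p(S)`-condition: an alternating `p`-multilinear map is a `K`-derivation in each
variable. -/
def IsMultiDer {p : ℕ}
    (θ : (MvPolynomial (Fin ℓ) K) [⋀^Fin p]→ₗ[K] (MvPolynomial (Fin ℓ) K)) : Prop :=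
  ∀ (i : Fin p) (v : Fin p → MvPolynomial (Fin ℓ) K) (f g : MvPolynomial (Fin ℓ) K),
    θ (Function.update v i (f * g)) =
      f * θ (Function.update v i g) + g * θ (Function.update v i f)

/-- The module of `p`-derivations `D^p(𝒜,m)` of a multiarrangement, as a submodule of the
alternating `p`-multilinear maps (for `p = 0` this is all of `S ≅ Der^0(S)`). -/
def Dp (A : MultiArr K ℓ) (p : ℕ) :
    Submodule (MvPolynomial (Fin ℓ) K)
      ((MvPolynomial (Fin ℓ) K) [⋀^Fin p]→ₗ[K] (MvPolynomial (Fin ℓ) K)) where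
  carrier := {θ | IsMultiDer θ ∧ ∀ φ ∈ A.duals, ∀ v : Fin p → MvPolynomial (Fin ℓ) K,
    ∀ i : Fin p, v i = formPoly φ → θ v ∈ Ideal.span {formPoly φ ^ A.mult φ}}
  add_mem' := by
    rintro θ η ⟨hθ, hθ'⟩ ⟨hη, hη'⟩
    refine ⟨fun i v f g => ?_, fun φ hφ v i hv => ?_⟩
    · simp only [AlternatingMap.add_apply, hθ i v f g, hη i v f g]; ring
    · simpa using add_mem (hθ' φ hφ v i hv) (hη' φ hφ v i hv)
  zero_mem' := by
    refine ⟨fun i v f g => by simp, fun φ hφ v i hv => by simp⟩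
  smul_mem' := by
    rintro c θ ⟨hθ, hθ'⟩
    refine ⟨fun i v f g => ?_, fun φ hφ v i hv => ?_⟩
    · simp only [AlternatingMap.smul_apply, smul_eq_mul, hθ i v f g]; ring
    · simpa using Ideal.mul_mem_left _ c (hθ' φ hφ v i hv)

/-- The subarrangement `(𝒜_X, m_X)`, consisting of the hyperplanes of `𝒜` containing `X`,
with the restricted multiplicity. -/
def restrictArr (A : MultiArr K ℓ) (X : Submodule K (Fin ℓ → K)) : MultiArr K ℓ where
  duals := A.duals.filter (fun φ => X ≤ LinearMap.ker φ)
  ne_zero := fun φ hφ => A.ne_zero φ (Finset.mem_filter.mp hφ).1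
  distinct_ker := fun φ hφ ψ hψ =>
    A.distinct_ker φ (Finset.mem_filter.mp hφ).1 ψ (Finset.mem_filter.mp hψ).1
  mult := A.mult
  mult_pos := fun φ hφ => A.mult_pos φ (Finset.mem_filter.mp hφ).1

/-- `X(P) = ⋂ H`, the intersection being over all `H ∈ 𝒜` with `X ⊆ H` and `α_H ∈ P`. -/
def XofP (A : MultiArr K ℓ) (X : Submodule K (Fin ℓ → K))
    (P : Ideal (MvPolynomial (Fin ℓ) K)) : Submodule K (Fin ℓ → K) :=
  ⨅ (φ : Module.Dual K (Fin ℓ → K))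
    (_ : φ ∈ A.duals ∧ X ≤ LinearMap.ker φ ∧ formPoly φ ∈ P), LinearMap.ker φ

lemma le_XofP (A : MultiArr K ℓ) (X : Submodule K (Fin ℓ → K))
    (P : Ideal (MvPolynomial (Fin ℓ) K)) : X ≤ XofP A X P :=
  le_iInf fun _ => le_iInf fun h => h.2.1

/-- `𝒜_Y ⊆ 𝒜_X` for `X ≤ Y`, hence `D^p(𝒜_X, m_X) ⊆ D^p(𝒜_Y, m_Y)`. -/
lemma Dp_restrict_mono (A : MultiArr K ℓ) {X Y : Submodule K (Fin ℓ → K)}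
    (hXY : X ≤ Y) (p : ℕ) :
    Dp (restrictArr A X) p ≤ Dp (restrictArr A Y) p := by
  rintro θ ⟨h1, h2⟩
  refine ⟨h1, fun φ hφ v i hv => ?_⟩
  have hφ' := Finset.mem_filter.mp hφ
  exact h2 φ (Finset.mem_filter.mpr ⟨hφ'.1, le_trans hXY hφ'.2⟩) v i hv

/-- For every `X` in the intersection lattice `L(𝒜)`, every prime ideal
`P ⊆ S` and every `0 ≤ p ≤ ℓ`, the localization at `P` of the inclusion
`D^p(𝒜_X, m_X) ⊆ D^p(𝒜_{X(P)}, m_{X(P)})` is an isomorphism (the functors `D^p` are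
local). -/
theorem Dp_localization_bijective (A : MultiArr K ℓ) (X : Submodule K (Fin ℓ → K))
    (hX : ∃ B ⊆ A.duals, X = ⨅ φ ∈ B, LinearMap.ker φ)
    (P : Ideal (MvPolynomial (Fin ℓ) K)) [P.IsPrime] :
    ∀ p : ℕ, p ≤ ℓ →
      Function.Bijective (LocalizedModule.map P.primeCompl
        (Submodule.inclusion (Dp_restrict_mono A (le_XofP A X P) p))) := by
  intro p _
  constructor
  · exact LocalizedModule.map_injective _ _ (Submodule.inclusion_injective _)
  · -- surjectivity
    intro y
    induction y using LocalizedModule.induction_on with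
    | h θ t =>
      -- the "bad" hyperplanes: in 𝒜_X but with defining form not in P
      set S0 : Finset (Module.Dual K (Fin ℓ → K)) :=
        (restrictArr A X).duals.filter (fun φ => formPoly φ ∉ P) with hS0
      set s : MvPolynomial (Fin ℓ) K := ∏ φ ∈ S0, formPoly φ ^ A.mult φ with hs
      have hsP : s ∈ P.primeCompl := by
        refine Submonoid.prod_mem _ (fun φ hφ => ?_)
        have hφ' : formPoly φ ∉ P := (Finset.mem_filter.mp hφ).2
        intro hmem
        exact hφ' (‹P.IsPrime›.mem_of_pow_mem _ hmem)
      -- s • θ lies in D^p(𝒜_X)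
      have hmem : s • (θ : (MvPolynomial (Fin ℓ) K) [⋀^Fin p]→ₗ[K]
          (MvPolynomial (Fin ℓ) K)) ∈ Dp (restrictArr A X) p := by
        obtain ⟨hθ1, hθ2⟩ := θ.2
        refine ⟨fun i v f g => ?_, fun φ hφ v i hv => ?_⟩
        · simp only [AlternatingMap.smul_apply, smul_eq_mul, hθ1 i v f g]; ring
        · by_cases hφP : formPoly φ ∈ P
          · -- φ also belongs to 𝒜_{X(P)}
            have hφ' : φ ∈ (restrictArr A (XofP A X P)).duals := by
              have hmf := Finset.mem_filter.mp hφ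
              refine Finset.mem_filter.mpr ⟨hmf.1, ?_⟩
              exact iInf_le_of_le φ (iInf_le_of_le ⟨hmf.1, hmf.2, hφP⟩ le_rfl)
            simpa [restrictArr] using Ideal.mul_mem_left _ s (hθ2 φ hφ' v i hv)
          · -- formPoly φ ^ mult φ divides s
            have hφS0 : φ ∈ S0 := Finset.mem_filter.mpr ⟨hφ, hφP⟩
            have hdvd : formPoly φ ^ A.mult φ ∣ s :=
              Finset.dvd_prod_of_mem _ hφS0
            simp only [AlternatingMap.smul_apply, smul_eq_mul]
            exact Ideal.mem_span_singleton.mpr (hdvd.mul_right _)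
      refine ⟨LocalizedModule.mk ⟨_, hmem⟩ (⟨s, hsP⟩ * t), ?_⟩
      rw [LocalizedModule.map_mk]
      have : (Submodule.inclusion (Dp_restrict_mono A (le_XofP A X P) p))
          ⟨_, hmem⟩ = (⟨s, hsP⟩ : P.primeCompl) • θ := by
        apply Subtype.ext
        rfl
      rw [this, LocalizedModule.mk_cancel_common_left]
end
end

section
/- Let K be algebraically closed and (A,m) a multiarrangement in V = K^ℓ. If h ∈ ∩_{X∈L} N^X_d (i.e., h is a homogeneous polynomial of degree d whose restriction to every X ∈ L is non-degenerate on X), then the radical of the ideal D(A,m)h of S generated by { θ(h) : θ ∈ D^1(A,m) } contains the homogeneous maximal ideal (x_1,…,x_ℓ). -/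
open MvPolynomial

noncomputable section

variable {K : Type*} [Field K] {ℓ : ℕ}

/-- The derivation module `D(𝒜,m) = D^1(𝒜,m) = {θ ∈ Der_K(S) : θ(α_H) ∈ α_H^{m(H)}S}`. -/
def D1 (A : MultiArr K ℓ) :
    Submodule (MvPolynomial (Fin ℓ) K)
      (Derivation K (MvPolynomial (Fin ℓ) K) (MvPolynomial (Fin ℓ) K)) where
  carrier := {θ | ∀ φ ∈ A.duals, θ (formPoly φ) ∈ Ideal.span {formPoly φ ^ A.mult φ}}
  add_mem' := fun ha hb φ hφ => by
    simpa using add_mem (ha φ hφ) (hb φ hφ)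
  zero_mem' := fun φ hφ => by simp
  smul_mem' := fun c θ hθ φ hφ => by
    simpa using Ideal.mul_mem_left _ c (hθ φ hφ)

/-- The derivative of `h` in the direction `u ∈ V`. -/
def dirDeriv (u : Fin ℓ → K) (h : MvPolynomial (Fin ℓ) K) : MvPolynomial (Fin ℓ) K :=
  ∑ i : Fin ℓ, MvPolynomial.C (u i) * MvPolynomial.pderiv i h

/-- `h` restricts to a polynomial function on `X` that is non-degenerate on `X`
(over an algebraically closed field this is the non-degeneracy condition
`√(∂_{x_1}(h|_X),…,∂_{x_k}(h|_X)) ⊇ (x_1,…,x_k)` in `S(X^*)`): the common zero locus on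
`X` of the derivatives of `h` along directions in `X` is contained in `{0}`. -/
def IsNondegOn (h : MvPolynomial (Fin ℓ) K) (X : Submodule K (Fin ℓ → K)) : Prop :=
  ∀ v ∈ X, v ≠ 0 → ∃ u ∈ X, MvPolynomial.eval v (dirDeriv u h) ≠ 0


lemma single_eq_ite (i : Fin ℓ) :
    (Pi.single i 1 : Fin ℓ → K) = fun j => if i = j then 1 else 0 := by
  funext j
  simp [Pi.single_apply, eq_comm]

lemma dual_apply_eq_sum (φ : Module.Dual K (Fin ℓ → K)) (u : Fin ℓ → K) :
    φ u = ∑ i, u i * φ (Pi.single i 1) := by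
  rw [LinearMap.pi_apply_eq_sum_univ φ u]
  simp only [smul_eq_mul, single_eq_ite]

lemma eval_formPoly (φ : Module.Dual K (Fin ℓ → K)) (v : Fin ℓ → K) :
    MvPolynomial.eval v (formPoly φ) = φ v := by
  rw [dual_apply_eq_sum φ v, formPoly]
  simp only [map_sum, map_mul, eval_C, eval_X]
  exact Finset.sum_congr rfl fun i _ => mul_comm _ _

lemma pderiv_formPoly (φ : Module.Dual K (Fin ℓ → K)) (j : Fin ℓ) :
    MvPolynomial.pderiv j (formPoly φ) = MvPolynomial.C (φ (Pi.single j 1)) := by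
  rw [formPoly, map_sum]
  rw [Finset.sum_eq_single j]
  · simp
  · intro i _ hij
    simp [pderiv_X, Pi.single_apply, hij]
  · simp

/-- Let `K` be algebraically closed. If `h` is a homogeneous polynomial of
degree `d` lying in `⋂_{X ∈ L} N^X_d` (its restriction to every member of the intersection
lattice is non-degenerate), then the radical of the ideal `D(𝒜,m)h` generated by
`{θ(h) : θ ∈ D^1(𝒜,m)}` contains the homogeneous maximal ideal `(x_1,…,x_ℓ)`. -/
theorem radical_D1_h_contains_max_ideal [IsAlgClosed K] (A : MultiArr K ℓ)
    (d : ℕ) (h : MvPolynomial (Fin ℓ) K) (hd : h.IsHomogeneous d)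
    (hnd : ∀ X : Submodule K (Fin ℓ → K),
      (∃ B ⊆ A.duals, X = ⨅ φ ∈ B, LinearMap.ker φ) → IsNondegOn h X) :
    Ideal.span (Set.range (MvPolynomial.X : Fin ℓ → MvPolynomial (Fin ℓ) K)) ≤
      (Ideal.span {g | ∃ θ ∈ D1 A, θ h = g}).radical := by
  classical
  have key : ∀ v ∈ MvPolynomial.zeroLocus K (Ideal.span {g | ∃ θ ∈ D1 A, θ h = g}),
      v = 0 := by
    intro v hv
    by_contra hv0
    set B : Finset (Module.Dual K (Fin ℓ → K)) := A.duals.filter (fun φ => φ v = 0) with hB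
    set X : Submodule K (Fin ℓ → K) := ⨅ φ ∈ B, LinearMap.ker φ with hX
    have hvX : v ∈ X := by
      rw [hX]
      simp only [Submodule.mem_iInf]
      intro φ hφ
      exact LinearMap.mem_ker.mpr (Finset.mem_filter.mp hφ).2
    obtain ⟨u, huX, hu⟩ := hnd X ⟨B, Finset.filter_subset _ _, rfl⟩ v hvX hv0
    set Q : MvPolynomial (Fin ℓ) K :=
      ∏ φ ∈ A.duals.filter (fun φ => φ v ≠ 0), formPoly φ ^ A.mult φ with hQ
    set θ : Derivation K (MvPolynomial (Fin ℓ) K) (MvPolynomial (Fin ℓ) K) :=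
      ∑ i : Fin ℓ, (Q * MvPolynomial.C (u i)) • MvPolynomial.pderiv i with hθ
    have hθapp : ∀ p, θ p = Q * dirDeriv u p := by
      intro p
      have hc : ⇑θ = ∑ i : Fin ℓ, ⇑((Q * MvPolynomial.C (u i)) • MvPolynomial.pderiv i) := by
        rw [hθ]
        exact map_sum (Derivation.coeFnAddMonoidHom) _ _
      rw [dirDeriv, Finset.mul_sum]
      rw [show θ p = (∑ i : Fin ℓ,
        ⇑((Q * MvPolynomial.C (u i)) • MvPolynomial.pderiv i)) p from congrFun hc p]
      simp only [Finset.sum_apply, Derivation.coe_smul, Pi.smul_apply, smul_eq_mul]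
      exact Finset.sum_congr rfl fun i _ => by ring
    have hθform : ∀ φ : Module.Dual K (Fin ℓ → K),
        θ (formPoly φ) = Q * MvPolynomial.C (φ u) := by
      intro φ
      rw [hθapp, dirDeriv]
      congr 1
      simp only [pderiv_formPoly, ← MvPolynomial.C_mul]
      rw [← map_sum]
      congr 1
      exact (dual_apply_eq_sum φ u).symm
    have hθD1 : θ ∈ D1 A := by
      intro φ hφ
      rw [hθform]
      by_cases hφv : φ v = 0
      · have huk : u ∈ LinearMap.ker φ := by
          rw [hX] at huX
          simp only [Submodule.mem_iInf] at huX
          exact huX φ (Finset.mem_filter.mpr ⟨hφ, hφv⟩)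
        rw [LinearMap.mem_ker.mp huk]
        simp
      · rw [Ideal.mem_span_singleton]
        exact dvd_mul_of_dvd_left
          (Finset.dvd_prod_of_mem _ (Finset.mem_filter.mpr ⟨hφ, hφv⟩)) _
    have hzero : MvPolynomial.eval v (θ h) = 0 :=
      hv (θ h) (Ideal.subset_span ⟨θ, hθD1, rfl⟩)
    rw [hθapp, map_mul] at hzero
    have hQv : MvPolynomial.eval v Q ≠ 0 := by
      rw [hQ, map_prod]
      refine Finset.prod_ne_zero_iff.mpr fun φ hφ => ?_
      rw [map_pow, eval_formPoly]
      exact pow_ne_zero _ (Finset.mem_filter.mp hφ).2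
    rcases mul_eq_zero.mp hzero with h1 | h2
    · exact hQv h1
    · exact hu h2
  rw [← MvPolynomial.vanishingIdeal_zeroLocus_eq_radical (K := K), Ideal.span_le]
  rintro _ ⟨i, rfl⟩
  rw [SetLike.mem_coe, MvPolynomial.mem_vanishingIdeal_iff]
  intro v hvz
  rw [MvPolynomial.aeval_X, key v hvz]
  rfl
end
end
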